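/- Let u ∈ G(ℝ^d) be homogeneous of degree α ∈ ℝ. Then u admits a tempered representative: there exists v ∈ G_τ(ℝ^d) such that K(v) = u; equivalently, u has a representative (ũ_ε)_ε which is a tempered moderate net. -/

import Mathlib

open Set Filter Topology MeasureTheory

noncomputable section

variable {E F : Type*} [NormedAddCommGroup E] [NormedSpace ℝ E]
  [NormedAddCommGroup F] [NormedSpace ℝ F]

/-- A net of smooth functions, indexed by `ε ∈ (0,1]`, is *moderate* on the open set `Ω`:
all iterated derivatives are `O(ε^{-N})` on compact subsets, for some `N`. -/
def IsModerate (Ω : Set E) (u : ℝ → E → F) : Prop :=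
  (∀ ε ∈ Set.Ioc (0:ℝ) 1, ContDiffOn ℝ (⊤:ℕ∞) (u ε) Ω) ∧
  ∀ K : Set E, IsCompact K → K ⊆ Ω → ∀ n : ℕ, ∃ N : ℕ, ∃ C : ℝ, ∃ ε₀ : ℝ, 0 < ε₀ ∧
    ∀ ε : ℝ, 0 < ε → ε < ε₀ → ∀ x ∈ K,
      ‖iteratedFDerivWithin ℝ n (u ε) Ω x‖ ≤ C * ε ^ (-(N:ℤ))

/-- A net of smooth functions is *negligible* on `Ω`: all iterated derivatives are `O(ε^m)`
on compact subsets, for every `m`. -/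
def IsNegligible (Ω : Set E) (u : ℝ → E → F) : Prop :=
  (∀ ε ∈ Set.Ioc (0:ℝ) 1, ContDiffOn ℝ (⊤:ℕ∞) (u ε) Ω) ∧
  ∀ K : Set E, IsCompact K → K ⊆ Ω → ∀ n : ℕ, ∀ m : ℕ, ∃ C : ℝ, ∃ ε₀ : ℝ, 0 < ε₀ ∧
    ∀ ε : ℝ, 0 < ε → ε < ε₀ → ∀ x ∈ K,
      ‖iteratedFDerivWithin ℝ n (u ε) Ω x‖ ≤ C * ε ^ m

/-- A net of numbers is *moderate*: `O(ε^{-N})` for some `N`. -/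
def NumModerate (c : ℝ → F) : Prop :=
  ∃ N : ℕ, ∃ C : ℝ, ∃ ε₀ : ℝ, 0 < ε₀ ∧ ∀ ε : ℝ, 0 < ε → ε < ε₀ → ‖c ε‖ ≤ C * ε ^ (-(N:ℤ))

/-- A net of numbers is *negligible*: `O(ε^m)` for every `m`. -/
def NumNegligible (c : ℝ → F) : Prop :=
  ∀ m : ℕ, ∃ C : ℝ, ∃ ε₀ : ℝ, 0 < ε₀ ∧ ∀ ε : ℝ, 0 < ε → ε < ε₀ → ‖c ε‖ ≤ C * ε ^ m

/-- A net of points is a representative of a *compactly supported generalized point* of `Ω`. -/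
def CompactlySupportedPoint (Ω : Set E) (a : ℝ → E) : Prop :=
  ∃ K : Set E, IsCompact K ∧ K ⊆ Ω ∧ ∃ ε₀ : ℝ, 0 < ε₀ ∧ ∀ ε : ℝ, 0 < ε → ε < ε₀ → a ε ∈ K

/-- The partial order on generalized reals, on representatives: `a ≤ b` iff `b - a` has a
representative with all terms nonnegative, i.e. `a ε + n ε ≤ b ε` for some negligible `n`. -/
def TildeLe (a b : ℝ → ℝ) : Prop :=
  ∃ n : ℝ → ℝ, NumNegligible n ∧ ∀ ε ∈ Set.Ioc (0:ℝ) 1, a ε + n ε ≤ b ε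

/-- Strict order `a << b`: `b - a` is strictly positive, i.e. `b ε - a ε > ε^m` for some `m`
and all small `ε`. -/
def TildeLt (a b : ℝ → ℝ) : Prop :=
  ∃ m : ℕ, ∃ ε₀ : ℝ, 0 < ε₀ ∧ ∀ ε : ℝ, 0 < ε → ε < ε₀ → a ε + ε ^ m < b ε

/-- A net of smooth functions on all of ℝ^d is *tempered moderate*: for each derivative
order there is `N` with a global bound `C·ε^{-N}·(1+|x|)^N`. -/
def TemperedModerate {E F : Type*} [NormedAddCommGroup E] [NormedSpace ℝ E]
    [NormedAddCommGroup F] [NormedSpace ℝ F] (v : ℝ → E → F) : Prop :=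
  (∀ ε ∈ Set.Ioc (0:ℝ) 1, ContDiff ℝ (⊤:ℕ∞) (v ε)) ∧
  ∀ n : ℕ, ∃ N : ℕ, ∃ C : ℝ, ∃ ε₀ : ℝ, 0 < ε₀ ∧ ∀ ε : ℝ, 0 < ε → ε < ε₀ →
    ∀ x : E, ‖iteratedFDeriv ℝ n (v ε) x‖ ≤ C * ε ^ (-(N:ℤ)) * (1 + ‖x‖) ^ N


lemma aux_norm_iteratedFDeriv_comp_smul_le {E F : Type*} [NormedAddCommGroup E]
    [NormedSpace ℝ E] [NormedAddCommGroup F] [NormedSpace ℝ F] {f : E → F}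
    (hf : ContDiff ℝ (⊤ : ℕ∞) f) {c : ℝ} (hc : |c| ≤ 1) (x : E) (n : ℕ) :
    ‖iteratedFDeriv ℝ n (fun y => f (c • y)) x‖ ≤ ‖iteratedFDeriv ℝ n f (c • x)‖ := by
  have hf' : ContDiff ℝ (n : WithTop ℕ∞) f := hf.of_le (by exact_mod_cast le_top)
  have hg : (fun y => f (c • y)) = f ∘ (c • ContinuousLinearMap.id ℝ E) := by
    funext y
    simp [Function.comp]
  rw [hg, (c • ContinuousLinearMap.id ℝ E).iteratedFDeriv_comp_right hf' x le_rfl]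
  have h1 : ‖c • ContinuousLinearMap.id ℝ E‖ ≤ 1 := by
    calc ‖c • ContinuousLinearMap.id ℝ E‖ ≤ |c| * ‖ContinuousLinearMap.id ℝ E‖ := by
          simpa [Real.norm_eq_abs] using norm_smul_le c (ContinuousLinearMap.id ℝ E)
      _ ≤ 1 * 1 := mul_le_mul hc ContinuousLinearMap.norm_id_le (norm_nonneg _) zero_le_one
      _ = 1 := one_mul 1
  have h2 := ContinuousMultilinearMap.norm_compContinuousLinearMap_le
      (iteratedFDeriv ℝ n f ((c • ContinuousLinearMap.id ℝ E) x))
      (fun _ : Fin n => c • ContinuousLinearMap.id ℝ E)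
  have h3 : ((c • ContinuousLinearMap.id ℝ E) x) = c • x := rfl
  rw [h3] at h2
  refine le_trans h2 ?_
  have h4 : (∏ _i : Fin n, ‖c • ContinuousLinearMap.id ℝ E‖) ≤ 1 :=
    Finset.prod_le_one (fun _ _ => norm_nonneg _) (fun _ _ => h1)
  calc ‖iteratedFDeriv ℝ n f (c • x)‖ * ∏ _i : Fin n, ‖c • ContinuousLinearMap.id ℝ E‖
      ≤ ‖iteratedFDeriv ℝ n f (c • x)‖ * 1 :=
        mul_le_mul_of_nonneg_left h4 (norm_nonneg _)
    _ = _ := mul_one _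

set_option maxHeartbeats 1000000 in
/-- a generalized function on ℝ^d homogeneous of degree `α` has a tempered
representative. -/
theorem statement_7
    (d : ℕ) (α : ℝ) (u : ℝ → EuclideanSpace ℝ (Fin d) → ℂ)
    (hu : IsModerate (Set.univ : Set (EuclideanSpace ℝ (Fin d))) u)
    (hhom : ∀ lam : ℝ, 0 < lam →
      IsNegligible (Set.univ : Set (EuclideanSpace ℝ (Fin d)))
        (fun ε x => u ε (lam • x) - ((lam ^ α : ℝ) : ℂ) * u ε x)) :
    ∃ v : ℝ → EuclideanSpace ℝ (Fin d) → ℂ, TemperedModerate v ∧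
      IsNegligible (Set.univ : Set (EuclideanSpace ℝ (Fin d)))
        (fun ε x => u ε x - v ε x) := by
  classical
  obtain ⟨husm, humod⟩ := hu
  obtain ⟨hwsm, hwneg⟩ := hhom 2 two_pos
  -- abbreviations
  have husm' : ∀ ε : ℝ, 0 < ε → ε ≤ 1 → ContDiff ℝ (⊤:ℕ∞) (u ε) := fun ε h1 h2 =>
    contDiffOn_univ.mp (husm ε ⟨h1, h2⟩)
  have hwsm' : ∀ ε : ℝ, 0 < ε → ε ≤ 1 → ContDiff ℝ (⊤:ℕ∞)
      (fun x => u ε ((2:ℝ) • x) - (((2:ℝ) ^ α : ℝ) : ℂ) * u ε x) := fun ε h1 h2 =>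
    contDiffOn_univ.mp (hwsm ε ⟨h1, h2⟩)
  -- base bounds on the ball of radius 2
  have hbase := fun n : ℕ => humod (Metric.closedBall 0 2) (isCompact_closedBall 0 2)
      (Set.subset_univ _) n
  choose Nb Cb εb hεb hb using hbase
  -- bounds for the scaling defect w on balls of radius 2^(j+1)
  have hwb := fun j n : ℕ => hwneg (Metric.closedBall 0 ((2:ℝ) ^ (j+1)))
      (isCompact_closedBall _ _) (Set.subset_univ _) n 1
  choose Cw εw hεw hw using hwb
  set δ : ℕ → ℕ → ℝ := fun j n => min (εw j n) (|Cw j n| + 1)⁻¹ with hδdef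
  have hδpos : ∀ j n, 0 < δ j n := fun j n => lt_min (hεw j n) (by positivity)
  have hδ : ∀ j n : ℕ, ∀ ε : ℝ, 0 < ε → ε < δ j n → ∀ x : EuclideanSpace ℝ (Fin d),
      ‖x‖ ≤ 2 ^ (j+1) →
      ‖iteratedFDeriv ℝ n (fun y => u ε ((2:ℝ) • y) - (((2:ℝ) ^ α : ℝ) : ℂ) * u ε y) x‖ ≤ 1 := by
    intro j n ε hε hεδ x hx
    have hmem : x ∈ Metric.closedBall (0 : EuclideanSpace ℝ (Fin d)) ((2:ℝ) ^ (j+1)) := by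
      rw [Metric.mem_closedBall, dist_zero_right]; exact hx
    have h1 := hw j n ε hε (lt_of_lt_of_le hεδ (min_le_left _ _)) x hmem
    rw [iteratedFDerivWithin_univ] at h1
    have h2 : ε < (|Cw j n| + 1)⁻¹ := lt_of_lt_of_le hεδ (min_le_right _ _)
    have hp : (0:ℝ) < |Cw j n| + 1 := by positivity
    have h2' : ε * (|Cw j n| + 1) < 1 := by
      rw [inv_eq_one_div] at h2
      exact (lt_div_iff₀ hp).mp h2
    calc ‖iteratedFDeriv ℝ n (fun y => u ε ((2:ℝ) • y) - (((2:ℝ) ^ α : ℝ) : ℂ) * u ε y) x‖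
        ≤ Cw j n * ε ^ 1 := h1
      _ ≤ 1 := by
          rw [pow_one]
          nlinarith [mul_le_mul_of_nonneg_right (le_abs_self (Cw j n)) hε.le]
  -- the decreasing sequence of thresholds η
  have hne : ∀ k : ℕ, (Finset.range (k+1)).Nonempty := fun k => Finset.nonempty_range_add_one
  have hne2 : ∀ k : ℕ, ((Finset.range (k+1)) ×ˢ (Finset.range (k+1))).Nonempty :=
    fun k => (hne k).product (hne k)
  set η : ℕ → ℝ := fun k => min ((2:ℝ)⁻¹ ^ k)
      (min ((Finset.range (k+1)).inf' (hne k) εb)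
        (((Finset.range (k+1)) ×ˢ (Finset.range (k+1))).inf' (hne2 k) (fun p => δ p.1 p.2)))
    with hηdef
  have hηpos : ∀ k, 0 < η k := by
    intro k
    refine lt_min (by positivity) (lt_min ?_ ?_)
    · rw [Finset.lt_inf'_iff]; exact fun i _ => hεb i
    · rw [Finset.lt_inf'_iff]; exact fun p _ => hδpos p.1 p.2
  have hη1 : ∀ k, η k ≤ (2:ℝ)⁻¹ ^ k := fun k => min_le_left _ _
  have hη2 : ∀ k n : ℕ, n ≤ k → η k ≤ εb n := by
    intro k n hnk
    refine le_trans (min_le_right _ _) (le_trans (min_le_left _ _) ?_)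
    exact Finset.inf'_le _ (Finset.mem_range.mpr (by omega))
  have hη3 : ∀ k j n : ℕ, j ≤ k → n ≤ k → η k ≤ δ j n := by
    intro k j n hjk hnk
    refine le_trans (min_le_right _ _) (le_trans (min_le_right _ _) ?_)
    have hmem : (j, n) ∈ (Finset.range (k+1)) ×ˢ (Finset.range (k+1)) :=
      Finset.mem_product.mpr ⟨Finset.mem_range.mpr (by omega), Finset.mem_range.mpr (by omega)⟩
    exact Finset.inf'_le (fun p => δ p.1 p.2) hmem
  have hηanti : ∀ k l : ℕ, k ≤ l → η l ≤ η k := by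
    intro k l hkl
    refine le_min ?_ (le_min ?_ ?_)
    · exact le_trans (hη1 l) (pow_le_pow_of_le_one (by norm_num) (by norm_num) hkl)
    · rw [Finset.le_inf'_iff]
      intro n hn
      have hn' : n ≤ k := Nat.lt_succ_iff.mp (Finset.mem_range.mp hn)
      exact hη2 l n (le_trans hn' hkl)
    · rw [Finset.le_inf'_iff]
      intro p hp
      obtain ⟨h1, h2⟩ := Finset.mem_product.mp hp
      have h1' : p.1 ≤ k := Nat.lt_succ_iff.mp (Finset.mem_range.mp h1)
      have h2' : p.2 ≤ k := Nat.lt_succ_iff.mp (Finset.mem_range.mp h2)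
      exact hη3 l p.1 p.2 (le_trans h1' hkl) (le_trans h2' hkl)
    -- the scale-selection function K
  have hKex : ∀ ε : ℝ, 0 < ε → ∃ k : ℕ, η (k+1) ≤ ε := by
    intro ε hε
    obtain ⟨k, hk⟩ := exists_pow_lt_of_lt_one hε (show (2:ℝ)⁻¹ < 1 by norm_num)
    refine ⟨k, le_of_lt (lt_of_le_of_lt (le_trans (hη1 (k+1)) ?_) hk)⟩
    exact pow_le_pow_of_le_one (by norm_num) (by norm_num) (Nat.le_succ k)
  set K : ℝ → ℕ := fun ε => if h : 0 < ε then Nat.find (hKex ε h) else 0 with hKdef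
  have hP1 : ∀ ε : ℝ, ∀ hε : 0 < ε, ∀ j : ℕ, 1 ≤ j → j ≤ K ε → ε < η j := by
    intro ε hε j hj1 hjK
    rw [hKdef] at hjK
    simp only [dif_pos hε] at hjK
    by_contra hcon
    push_neg at hcon
    have hfind : Nat.find (hKex ε hε) ≤ j - 1 := Nat.find_le (by
      have : j - 1 + 1 = j := by omega
      rw [this]; exact hcon)
    omega
  have hP2 : ∀ ε : ℝ, ∀ hε : 0 < ε, ∀ k : ℕ, ε < η k → k ≤ K ε := by
    intro ε hε k hk
    rw [hKdef]
    simp only [dif_pos hε]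
    rw [Nat.le_find_iff]
    intro m hm hcon
    have : η k ≤ η (m+1) := hηanti (m+1) k (by omega)
    linarith
  have hKinv : ∀ ε : ℝ, 0 < ε → ε ≤ 1 → (2:ℝ) ^ (K ε) ≤ ε⁻¹ := by
    intro ε hε hε1
    have hinv1 : (1:ℝ) ≤ ε⁻¹ := by
      have h := mul_inv_cancel₀ hε.ne'
      have hip : (0:ℝ) < ε⁻¹ := by positivity
      nlinarith
    rcases Nat.eq_zero_or_pos (K ε) with h | h
    · rw [h, pow_zero]; exact hinv1
    · have h2 : ε < (2:ℝ)⁻¹ ^ (K ε) := lt_of_lt_of_le (hP1 ε hε (K ε) h le_rfl) (hη1 _)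
      rw [inv_pow] at h2
      have hp : (0:ℝ) < 2 ^ (K ε) := by positivity
      have h3 : ε * (2:ℝ) ^ (K ε) < 1 := by
        calc ε * (2:ℝ) ^ (K ε) < ((2:ℝ) ^ (K ε))⁻¹ * (2:ℝ) ^ (K ε) := by
              exact mul_lt_mul_of_pos_right h2 hp
          _ = 1 := inv_mul_cancel₀ hp.ne'
      calc (2:ℝ) ^ (K ε) = ε⁻¹ * (ε * (2:ℝ) ^ (K ε)) := by
            field_simp
        _ ≤ ε⁻¹ * 1 := mul_le_mul_of_nonneg_left h3.le (by positivity)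
        _ = ε⁻¹ := mul_one _
  -- constants
  set q : ℕ := ⌈α⌉₊ with hqdef
  have hApos : (0:ℝ) < (2:ℝ) ^ α := Real.rpow_pos_of_pos two_pos α
  have hAq : (2:ℝ) ^ α ≤ (2:ℝ) ^ q := by
    calc (2:ℝ) ^ α ≤ (2:ℝ) ^ (q:ℝ) :=
          Real.rpow_le_rpow_of_exponent_le one_le_two (Nat.le_ceil α)
      _ = (2:ℝ) ^ q := by rw [Real.rpow_natCast]
  have hPq1 : (1:ℝ) ≤ (2:ℝ) ^ q := one_le_pow₀ one_le_two
  set Cb' : ℕ → ℝ := fun n => max (Cb n) 0 with hCb'def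
  have hCb'0 : ∀ n, 0 ≤ Cb' n := fun n => le_max_right _ _
  -- a zpow-to-pow conversion
  have hzpow : ∀ (ε : ℝ) (N : ℕ), ε ^ (-(N:ℤ)) = ε⁻¹ ^ N := fun ε N => by
    rw [zpow_neg, zpow_natCast, inv_pow]
  -- the key pointwise growth estimate
  have key : ∀ n : ℕ, ∀ ε : ℝ, 0 < ε → ε < η (n+1) → ∀ j : ℕ, j ≤ K ε →
      ∀ x : EuclideanSpace ℝ (Fin d), ‖x‖ ≤ 2 ^ (j+1) →
      ‖iteratedFDeriv ℝ n (u ε) x‖ ≤ ((2:ℝ) ^ q) ^ j * (Cb' n * ε⁻¹ ^ (Nb n) + j) := by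
    intro n ε hε hεη
    have hε1 : ε ≤ 1 := by
      have := lt_of_lt_of_le hεη (hη1 (n+1))
      have h2 : (2:ℝ)⁻¹ ^ (n+1) ≤ 1 := pow_le_one₀ (by norm_num) (by norm_num)
      linarith
    intro j
    induction j with
    | zero =>
      intro _ x hx
      have hmem : x ∈ Metric.closedBall (0 : EuclideanSpace ℝ (Fin d)) 2 := by
        rw [Metric.mem_closedBall, dist_zero_right]
        simpa using hx
      have h1 := hb n ε hε (lt_of_lt_of_le hεη (hη2 (n+1) n (by omega))) x hmem
      rw [iteratedFDerivWithin_univ] at h1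
      calc ‖iteratedFDeriv ℝ n (u ε) x‖ ≤ Cb n * ε ^ (-(Nb n:ℤ)) := h1
        _ ≤ Cb' n * ε⁻¹ ^ (Nb n) := by
            rw [hzpow]
            exact mul_le_mul_of_nonneg_right (le_max_left _ _) (by positivity)
        _ = ((2:ℝ) ^ q) ^ 0 * (Cb' n * ε⁻¹ ^ (Nb n) + (0:ℕ)) := by
            push_cast; ring
    | succ j ih =>
      intro hjK x hx
      have hjK' : j ≤ K ε := le_trans (Nat.le_succ j) hjK
      set x' : EuclideanSpace ℝ (Fin d) := (2:ℝ)⁻¹ • x with hx'def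
      have hx' : ‖x'‖ ≤ 2 ^ (j+1) := by
        rw [hx'def, norm_smul, Real.norm_eq_abs]
        have h2 : |((2:ℝ)⁻¹)| = (2:ℝ)⁻¹ := by norm_num
        rw [h2]
        have : (2:ℝ) ^ (j+1+1) = 2 * 2 ^ (j+1) := by ring
        rw [this] at hx
        linarith [norm_nonneg x]
      set g1 : EuclideanSpace ℝ (Fin d) → ℂ := fun z => u ε ((2:ℝ)⁻¹ • z) with hg1def
      set g2 : EuclideanSpace ℝ (Fin d) → ℂ :=
        fun z => (fun y => u ε ((2:ℝ) • y) - (((2:ℝ) ^ α : ℝ) : ℂ) * u ε y) ((2:ℝ)⁻¹ • z)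
        with hg2def
      have hsm1 : ContDiff ℝ (⊤:ℕ∞) g1 :=
        (husm' ε hε hε1).comp (contDiff_id.const_smul ((2:ℝ)⁻¹))
      have hsm2 : ContDiff ℝ (⊤:ℕ∞) g2 :=
        (hwsm' ε hε hε1).comp (contDiff_id.const_smul ((2:ℝ)⁻¹))
      have hid : u ε = fun y => (((2:ℝ) ^ α : ℝ) : ℂ) • g1 y + g2 y := by
        funext y
        rw [hg1def, hg2def]
        simp only [smul_eq_mul]
        have h2 : (2:ℝ) • ((2:ℝ)⁻¹ • y) = y := by
          rw [smul_smul]; norm_num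
        rw [h2]
        ring
      have hD : iteratedFDeriv ℝ n (u ε) x
          = (((2:ℝ) ^ α : ℝ) : ℂ) • iteratedFDeriv ℝ n g1 x + iteratedFDeriv ℝ n g2 x := by
        conv_lhs => rw [hid]
        have hnt : ((n:ℕ) : WithTop ℕ∞) ≤ ((⊤:ℕ∞) : WithTop ℕ∞) := by exact_mod_cast le_top
        rw [iteratedFDeriv_add_apply' ((hsm1.of_le hnt).const_smul _).contDiffAt
          (hsm2.of_le hnt).contDiffAt,
          iteratedFDeriv_const_smul_apply' (hsm1.of_le hnt).contDiffAt]
      have hb1 : ‖iteratedFDeriv ℝ n g1 x‖ ≤ ((2:ℝ) ^ q) ^ j * (Cb' n * ε⁻¹ ^ (Nb n) + j) := by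
        refine le_trans (aux_norm_iteratedFDeriv_comp_smul_le (c := (2:ℝ)⁻¹)
          (husm' ε hε hε1) (show |(2:ℝ)⁻¹| ≤ 1 by rw [abs_le]; constructor <;> norm_num) x n) ?_
        exact ih hjK' x' hx'
      have hb2 : ‖iteratedFDeriv ℝ n g2 x‖ ≤ 1 := by
        refine le_trans (aux_norm_iteratedFDeriv_comp_smul_le (c := (2:ℝ)⁻¹)
          (hwsm' ε hε hε1) (show |(2:ℝ)⁻¹| ≤ 1 by rw [abs_le]; constructor <;> norm_num) x n) ?_
        refine hδ j n ε hε ?_ x' hx'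
        rcases le_total (j+1) (n+1) with hc | hc
        · exact lt_of_lt_of_le hεη (hη3 (n+1) j n (by omega) (by omega))
        · exact lt_of_lt_of_le (hP1 ε hε (j+1) (Nat.succ_pos j) hjK)
            (hη3 (j+1) j n (by omega) (by omega))
      rw [hD]
      have hnorm : ‖(((2:ℝ) ^ α : ℝ) : ℂ)‖ = (2:ℝ) ^ α := by
        rw [Complex.norm_real, Real.norm_eq_abs, abs_of_pos hApos]
      calc ‖(((2:ℝ) ^ α : ℝ) : ℂ) • iteratedFDeriv ℝ n g1 x + iteratedFDeriv ℝ n g2 x‖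
          ≤ (2:ℝ) ^ α * ‖iteratedFDeriv ℝ n g1 x‖ + ‖iteratedFDeriv ℝ n g2 x‖ := by
            refine le_trans (norm_add_le _ _) ?_
            rw [norm_smul, hnorm]
        _ ≤ (2:ℝ) ^ α * (((2:ℝ) ^ q) ^ j * (Cb' n * ε⁻¹ ^ (Nb n) + j)) + 1 := by
            have hg1n : (0:ℝ) ≤ ‖iteratedFDeriv ℝ n g1 x‖ := norm_nonneg _
            nlinarith
        _ ≤ ((2:ℝ) ^ q) ^ (j+1) * (Cb' n * ε⁻¹ ^ (Nb n) + (j+1:ℕ)) := by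
            have hBnn : (0:ℝ) ≤ Cb' n * ε⁻¹ ^ (Nb n) + j := by positivity
            have hs : ((2:ℝ) ^ q) ^ (j+1) = ((2:ℝ) ^ q) ^ j * (2:ℝ) ^ q := pow_succ _ _
            have hpj : (1:ℝ) ≤ ((2:ℝ) ^ q) ^ j := one_le_pow₀ hPq1
            have h1 : (2:ℝ) ^ α * (((2:ℝ) ^ q) ^ j * (Cb' n * ε⁻¹ ^ (Nb n) + j))
                ≤ (2:ℝ) ^ q * (((2:ℝ) ^ q) ^ j * (Cb' n * ε⁻¹ ^ (Nb n) + j)) := by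
              exact mul_le_mul_of_nonneg_right hAq (by positivity)
            push_cast
            nlinarith
    -- global tempered estimate
  have key2 : ∀ n : ℕ, ∀ ε : ℝ, 0 < ε → ε < η (n+1) →
      ∀ x : EuclideanSpace ℝ (Fin d), ‖x‖ ≤ 2 ^ (K ε + 1) →
      ‖iteratedFDeriv ℝ n (u ε) x‖ ≤ (Cb' n + 1) * ε⁻¹ ^ (q + Nb n + 1) := by
    intro n ε hε hεη x hx
    have hε1 : ε ≤ 1 := by
      have h1 := lt_of_lt_of_le hεη (hη1 (n+1))
      have h2 : (2:ℝ)⁻¹ ^ (n+1) ≤ 1 := pow_le_one₀ (by norm_num) (by norm_num)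
      linarith
    have h0 := key n ε hε hεη (K ε) le_rfl x hx
    have hK2 : (2:ℝ) ^ (K ε) ≤ ε⁻¹ := hKinv ε hε hε1
    have he1 : (1:ℝ) ≤ ε⁻¹ := le_trans (one_le_pow₀ one_le_two) hK2
    have hKle : (K ε : ℝ) ≤ ε⁻¹ := by
      have h4 : (K ε : ℝ) ≤ (2:ℝ) ^ (K ε) := by exact_mod_cast (Nat.lt_two_pow_self (n := K ε)).le
      linarith
    have hPqK : ((2:ℝ) ^ q) ^ (K ε) ≤ ε⁻¹ ^ q := by
      have h5 : ((2:ℝ) ^ q) ^ (K ε) = ((2:ℝ) ^ (K ε)) ^ q := by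
        rw [← pow_mul, mul_comm, pow_mul]
      rw [h5]
      exact pow_le_pow_left₀ (by positivity) hK2 q
    have h5 : Cb' n * ε⁻¹ ^ Nb n + (K ε : ℝ) ≤ (Cb' n + 1) * ε⁻¹ ^ (Nb n + 1) := by
      have e0 : (0:ℝ) < ε⁻¹ := by positivity
      have e1 : ε⁻¹ ^ Nb n ≤ ε⁻¹ ^ (Nb n + 1) := pow_le_pow_right₀ he1 (Nat.le_succ _)
      have e2 : (K ε : ℝ) ≤ ε⁻¹ ^ (Nb n + 1) :=
        le_trans hKle (le_self_pow₀ he1 (Nat.succ_ne_zero _))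
      nlinarith [hCb'0 n, pow_nonneg e0.le (Nb n)]
    calc ‖iteratedFDeriv ℝ n (u ε) x‖
        ≤ ((2:ℝ) ^ q) ^ (K ε) * (Cb' n * ε⁻¹ ^ Nb n + (K ε : ℝ)) := h0
      _ ≤ ε⁻¹ ^ q * ((Cb' n + 1) * ε⁻¹ ^ (Nb n + 1)) := by
          refine mul_le_mul hPqK h5 ?_ (by positivity)
          positivity
      _ = (Cb' n + 1) * ε⁻¹ ^ (q + Nb n + 1) := by
          rw [show q + Nb n + 1 = q + (Nb n + 1) by omega, pow_add]
          ring
  -- the cutoff bump function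
  set χ : ContDiffBump (0 : EuclideanSpace ℝ (Fin d)) := ⟨1, 3/2, one_pos, by norm_num⟩
    with hχdef
  have hMχ : ∀ i : ℕ, ∃ M : ℝ, 0 ≤ M ∧ ∀ y, ‖iteratedFDeriv ℝ i (χ : _ → ℝ) y‖ ≤ M := by
    intro i
    obtain ⟨M, hM⟩ := (ContDiff.continuous_iteratedFDeriv (le_refl ((i:ℕ) : WithTop ℕ∞))
      χ.contDiff).bounded_above_of_compact_support (χ.hasCompactSupport.iteratedFDeriv i)
    exact ⟨M, le_trans (norm_nonneg _) (hM 0), hM⟩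
  choose Mχ hMχ0 hMχb using hMχ
  -- vanishing principle
  have hEvZero : ∀ (f : EuclideanSpace ℝ (Fin d) → ℂ) (x : EuclideanSpace ℝ (Fin d)) (n : ℕ),
      f =ᶠ[𝓝 x] (fun _ => (0:ℂ)) → iteratedFDeriv ℝ n f x = 0 := by
    intro f x n hf
    have h1 : iteratedFDeriv ℝ n f x = iteratedFDeriv ℝ n (fun _ => (0:ℂ)) x := by
      rw [← iteratedFDerivWithin_univ, ← iteratedFDerivWithin_univ]
      refine Filter.EventuallyEq.iteratedFDerivWithin_eq ?_ ?_ n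
      · rw [nhdsWithin_univ]; exact hf
      · exact hf.eq_of_nhds
    rw [h1]
    simp [iteratedFDeriv_zero_fun]
  -- the scaling parameter and the candidate v
  set cc : ℝ → ℝ := fun ε => ((2:ℝ) ^ (K ε))⁻¹ with hccdef
  have hcc0 : ∀ ε, 0 < cc ε := fun ε => by positivity
  have hccK : ∀ ε, cc ε * (2:ℝ) ^ (K ε) = 1 := fun ε => inv_mul_cancel₀ (by positivity)
  have hcc1 : ∀ ε, |cc ε| ≤ 1 := by
    intro ε
    rw [abs_of_pos (hcc0 ε)]
    have h1 : (1:ℝ) ≤ (2:ℝ) ^ (K ε) := one_le_pow₀ one_le_two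
    rw [hccdef]
    simp only []
    rw [inv_le_one_iff₀]
    right; exact h1
  set v : ℝ → EuclideanSpace ℝ (Fin d) → ℂ := fun ε y => (χ : _ → ℝ) (cc ε • y) • u ε y
    with hvdef
  have hvsm : ∀ ε : ℝ, 0 < ε → ε ≤ 1 → ContDiff ℝ (⊤:ℕ∞) (v ε) := by
    intro ε h1 h2
    exact (χ.contDiff.comp (contDiff_id.const_smul (cc ε))).smul (husm' ε h1 h2)
  refine ⟨v, ⟨fun ε hεI => hvsm ε hεI.1 hεI.2, ?_⟩, ?_, ?_⟩
  · -- tempered bounds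
    intro n
    set N' : ℕ := q + (Finset.range (n+1)).sup Nb + 1 with hN'def
    set CC : ℝ := ∑ i ∈ Finset.range (n+1), (n.choose i : ℝ) * Mχ i * (Cb' (n-i) + 1)
      with hCCdef
    have hCC0 : 0 ≤ CC := by
      refine Finset.sum_nonneg fun i _ => ?_
      have h1 := hMχ0 i
      have h2 := hCb'0 (n-i)
      positivity
    refine ⟨N', CC, η (n+1), hηpos _, ?_⟩
    intro ε hε hεη x
    have hε1 : ε ≤ 1 := by
      have h1 := lt_of_lt_of_le hεη (hη1 (n+1))
      have h2 : (2:ℝ)⁻¹ ^ (n+1) ≤ 1 := pow_le_one₀ (by norm_num) (by norm_num)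
      linarith
    have he1 : (1:ℝ) ≤ ε⁻¹ := le_trans (one_le_pow₀ one_le_two) (hKinv ε hε hε1)
    have main : ‖iteratedFDeriv ℝ n (v ε) x‖ ≤ CC * ε⁻¹ ^ N' := by
      by_cases hx2 : ‖x‖ ≤ 2 ^ (K ε + 1)
      · have hsmχ : ContDiff ℝ ((n:ℕ) : WithTop ℕ∞) (fun y => (χ : _ → ℝ) (cc ε • y)) :=
          χ.contDiff.comp (contDiff_id.const_smul (cc ε))
        have hsmu : ContDiff ℝ ((n:ℕ) : WithTop ℕ∞) (u ε) :=
          (husm' ε hε hε1).of_le (by exact_mod_cast le_top)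
        have hleib := norm_iteratedFDeriv_smul_le (𝕜 := ℝ) hsmχ hsmu x
          (le_refl ((n:ℕ) : WithTop ℕ∞))
        refine le_trans hleib ?_
        rw [hCCdef, Finset.sum_mul]
        refine Finset.sum_le_sum ?_
        intro i hi
        have hii : i ≤ n := Nat.lt_succ_iff.mp (Finset.mem_range.mp hi)
        have hχb : ‖iteratedFDeriv ℝ i (fun y => (χ : _ → ℝ) (cc ε • y)) x‖ ≤ Mχ i :=
          le_trans (aux_norm_iteratedFDeriv_comp_smul_le χ.contDiff (hcc1 ε) x i) (hMχb i _)
        have hub : ‖iteratedFDeriv ℝ (n - i) (u ε) x‖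
            ≤ (Cb' (n-i) + 1) * ε⁻¹ ^ (q + Nb (n-i) + 1) := by
          refine key2 (n-i) ε hε ?_ x hx2
          exact lt_of_lt_of_le hεη (hηanti (n-i+1) (n+1) (by omega))
        have hpow : ε⁻¹ ^ (q + Nb (n-i) + 1) ≤ ε⁻¹ ^ N' := by
          refine pow_le_pow_right₀ he1 ?_
          have h6 : Nb (n-i) ≤ (Finset.range (n+1)).sup Nb :=
            Finset.le_sup (Finset.mem_range.mpr (by omega))
          rw [hN'def]; omega
        have hub2 : ‖iteratedFDeriv ℝ (n - i) (u ε) x‖ ≤ (Cb' (n-i) + 1) * ε⁻¹ ^ N' := by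
          refine le_trans hub ?_
          have := hCb'0 (n-i)
          exact mul_le_mul_of_nonneg_left hpow (by positivity)
        calc (n.choose i : ℝ) * ‖iteratedFDeriv ℝ i (fun y => (χ : _ → ℝ) (cc ε • y)) x‖
              * ‖iteratedFDeriv ℝ (n - i) (u ε) x‖
            ≤ (n.choose i : ℝ) * Mχ i * ((Cb' (n-i) + 1) * ε⁻¹ ^ N') := by
              have hnn1 : (0:ℝ) ≤ (n.choose i : ℝ) := by positivity
              have hnn2 := norm_nonneg (iteratedFDeriv ℝ i (fun y => (χ : _ → ℝ) (cc ε • y)) x)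
              have hnn3 := norm_nonneg (iteratedFDeriv ℝ (n - i) (u ε) x)
              have hnn4 := hMχ0 i
              have s1 : (n.choose i : ℝ) * ‖iteratedFDeriv ℝ i (fun y => (χ : _ → ℝ) (cc ε • y)) x‖
                  ≤ (n.choose i : ℝ) * Mχ i := mul_le_mul_of_nonneg_left hχb hnn1
              exact mul_le_mul s1 hub2 hnn3 (by positivity)
          _ = (n.choose i : ℝ) * Mχ i * (Cb' (n-i) + 1) * ε⁻¹ ^ N' := by ring
      · push_neg at hx2
        have hxmem : (3/2) * (2:ℝ) ^ (K ε) < ‖x‖ := by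
          have h7 : (3/2) * (2:ℝ) ^ (K ε) < 2 ^ (K ε + 1) := by
            have := pow_pos (show (0:ℝ) < 2 by norm_num) (K ε)
            rw [pow_succ]
            nlinarith
          linarith
        have hev : v ε =ᶠ[𝓝 x] (fun _ => (0:ℂ)) := by
          have hopen : IsOpen {y : EuclideanSpace ℝ (Fin d) | (3/2) * (2:ℝ) ^ (K ε) < ‖y‖} :=
            isOpen_lt continuous_const continuous_norm
          filter_upwards [hopen.mem_nhds hxmem] with y hy
          have hχ0 : (χ : _ → ℝ) (cc ε • y) = 0 := by
            apply χ.zero_of_le_dist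
            rw [dist_zero_right, norm_smul, Real.norm_eq_abs, abs_of_pos (hcc0 ε)]
            have h2 : (3/2) * (2:ℝ) ^ (K ε) ≤ ‖y‖ := le_of_lt hy
            have h3 : cc ε * ((3/2) * (2:ℝ) ^ (K ε)) ≤ cc ε * ‖y‖ :=
              mul_le_mul_of_nonneg_left h2 (hcc0 ε).le
            have h4 : cc ε * ((3/2) * (2:ℝ) ^ (K ε)) = 3/2 := by
              have := hccK ε
              nlinarith [hccK ε]
            rw [hχdef]
            simp only []
            linarith
          rw [hvdef]
          simp only [hχ0, zero_smul]
        rw [hEvZero (v ε) x n hev, norm_zero]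
        positivity
    calc ‖iteratedFDeriv ℝ n (v ε) x‖ ≤ CC * ε⁻¹ ^ N' := main
      _ = CC * ε ^ (-(N':ℤ)) * 1 := by rw [hzpow]; ring
      _ ≤ CC * ε ^ (-(N':ℤ)) * (1 + ‖x‖) ^ N' := by
          have h1 : (1:ℝ) ≤ (1 + ‖x‖) ^ N' := one_le_pow₀ (by linarith [norm_nonneg x])
          have h2 : (0:ℝ) ≤ CC * ε ^ (-(N':ℤ)) := by
            have h3 : (0:ℝ) ≤ ε ^ (-(N':ℤ)) := by positivity
            exact mul_nonneg hCC0 h3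
          nlinarith
  · -- negligibility: smoothness of the difference
    intro ε hεI
    refine contDiffOn_univ.2 ?_
    exact (husm' ε hεI.1 hεI.2).sub (hvsm ε hεI.1 hεI.2)
  · -- negligibility: bounds on compact sets
    intro Q hQc _ n m
    obtain ⟨R, hQR⟩ := hQc.isBounded.subset_closedBall 0
    obtain ⟨k, hk⟩ := pow_unbounded_of_one_lt R (show (1:ℝ) < 2 by norm_num)
    refine ⟨1, η (k+1), hηpos _, ?_⟩
    intro ε hε hεη x hxQ
    have hK : k+1 ≤ K ε := hP2 ε hε (k+1) hεη
    have hxR : ‖x‖ ≤ R := by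
      have := hQR hxQ
      rwa [Metric.mem_closedBall, dist_zero_right] at this
    have hev : (fun y => u ε y - v ε y) =ᶠ[𝓝 x] (fun _ => (0:ℂ)) := by
      have hopen : IsOpen {y : EuclideanSpace ℝ (Fin d) | ‖y‖ < 2 ^ (k+1)} :=
        isOpen_lt continuous_norm continuous_const
      have hxmem : ‖x‖ < (2:ℝ) ^ (k+1) :=
        lt_of_le_of_lt hxR (lt_of_lt_of_le hk (pow_le_pow_right₀ one_le_two (Nat.le_succ k)))
      filter_upwards [hopen.mem_nhds hxmem] with y hy
      have hχ1 : (χ : _ → ℝ) (cc ε • y) = 1 := by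
        apply χ.one_of_mem_closedBall
        rw [Metric.mem_closedBall, dist_zero_right, norm_smul, Real.norm_eq_abs,
          abs_of_pos (hcc0 ε)]
        have h2 : ‖y‖ ≤ (2:ℝ) ^ (K ε) := by
          have h2' : (2:ℝ) ^ (k+1) ≤ (2:ℝ) ^ (K ε) := pow_le_pow_right₀ one_le_two hK
          exact le_trans (le_of_lt hy) h2'
        have h3 : cc ε * ‖y‖ ≤ cc ε * (2:ℝ) ^ (K ε) :=
          mul_le_mul_of_nonneg_left h2 (hcc0 ε).le
        rw [hχdef]
        simp only []
        rw [hccK ε] at h3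
        exact h3
      rw [hvdef]
      simp only [hχ1, one_smul, sub_self]
    have hZ := hEvZero (fun y => u ε y - v ε y) x n hev
    show ‖iteratedFDerivWithin ℝ n (fun y => u ε y - v ε y) Set.univ x‖ ≤ 1 * ε ^ m
    rw [iteratedFDerivWithin_univ, hZ, norm_zero]
    positivity
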